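/- Let (θ_n)_{n≥1} be a summable family of nonnegative elements of E and let (ξ_n)_{n≥1} and (η_n)_{n≥1} be sequences in the closed unit ball of H. Then: (a) the family of operators (θ_n·(ξ_n⟨·,η_n⟩))_{n≥1}, where θ_n·(ξ_n⟨·,η_n⟩) denotes the operator ζ ↦ ξ_n·(⟨ζ,η_n⟩·θ_n), is summable in K(H) for the operator norm; let u denote its sum. (b) With e_i := (δ_{iλ}·p_i)_{λ∈I} ∈ H for each i ∈ I, the family (⟨u e_i, e_i⟩)_{i∈I} is summable in E and ∑_{i∈I} ⟨u e_i, e_i⟩ = ∑_{n≥1} θ_n·⟨ξ_n, η_n⟩. -/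

import Mathlib

open scoped ComplexOrder

noncomputable section

abbrev ell2 (I : Type*) : Type _ := lp (fun _ : I => ℂ) 2

/-- `n`-th singular value of an operator: distance to operators of rank `< n`. -/
def sval {F : Type*} [NormedAddCommGroup F] [InnerProductSpace ℂ F] (n : ℕ)
    (a : F →L[ℂ] F) : ℝ :=
  sInf {r : ℝ | ∃ b : F →L[ℂ] F,
    Module.rank ℂ (LinearMap.range (b : F →ₗ[ℂ] F)) < n ∧ r = ‖a - b‖}

/-- rank one operator `z ↦ ⟨z, y⟩ • x` (inner product linear in the first variable). -/
def rankOne {F : Type*} [NormedAddCommGroup F] [InnerProductSpace ℂ F] (x y : F) :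
    F →L[ℂ] F :=
  (ContinuousLinearMap.toSpanSingleton ℂ x).comp ((innerSL ℂ) y)

variable {T I : Type*} [TopologicalSpace T] [CompactSpace T] [T2Space T]

/-- membership in the Hilbert right `C(T,ℂ)`-module `H = ⊕_i p_i E`. -/
def MemH (p : I → C(T, ℂ)) (ξ : I → C(T, ℂ)) : Prop :=
  (∀ i, p i * ξ i = ξ i) ∧ Summable fun i => star (ξ i) * ξ i

/-- the `E`-valued inner product of `H`, `⟨ξ, η⟩ = ∑ i, η i * * ξ i`. -/
def hinner (ξ η : I → C(T, ℂ)) : C(T, ℂ) := ∑' i, star (η i) * ξ i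

/-- the norm of `H`. -/
def hnorm (ξ : I → C(T, ℂ)) : ℝ := Real.sqrt ‖hinner ξ ξ‖

/-- adjointable operators on `H`, i.e. the elements of `L_E(H)`. -/
structure Adjointable (p : I → C(T, ℂ)) where
  toFun : (I → C(T, ℂ)) → (I → C(T, ℂ))
  adj : (I → C(T, ℂ)) → (I → C(T, ℂ))
  mem' : ∀ ξ, MemH p ξ → MemH p (toFun ξ)
  adj_mem' : ∀ ξ, MemH p ξ → MemH p (adj ξ)
  map_add' : ∀ ξ η, MemH p ξ → MemH p η → toFun (ξ + η) = toFun ξ + toFun η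
  map_smul' : ∀ (x : C(T, ℂ)) ξ, MemH p ξ →
    toFun (fun i => ξ i * x) = fun i => toFun ξ i * x
  bound' : ∃ C : ℝ, ∀ ξ, MemH p ξ → hnorm (toFun ξ) ≤ C * hnorm ξ
  inner_adj' : ∀ ξ η, MemH p ξ → MemH p η → hinner (toFun ξ) η = hinner ξ (adj η)

/-- `a : ℓ²(I) → ℓ²(I)` represents `φ_t u := ψ_t ∘ u ∘ ψ`. -/
def Represents (p : I → C(T, ℂ)) (t : T)
    (u : (I → C(T, ℂ)) → (I → C(T, ℂ))) (a : ell2 I →L[ℂ] ell2 I) : Prop :=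
  ∀ ζ : ell2 I, ∀ i : I, (a ζ : ∀ _ : I, ℂ) i = u (fun j => ((ζ : ∀ _ : I, ℂ) j) • p j) i t

/-- membership in `K(H)`: uniform approximation, on the unit ball of `H`, by finite sums of
rank one module operators. -/
def CompactH (p : I → C(T, ℂ)) (u : (I → C(T, ℂ)) → (I → C(T, ℂ))) : Prop :=
  ∀ ε : ℝ, 0 < ε → ∃ (m : ℕ) (ξs ηs : Fin m → (I → C(T, ℂ))),
    (∀ k, MemH p (ξs k) ∧ MemH p (ηs k)) ∧
    ∀ ζ, MemH p ζ → hnorm ζ ≤ 1 →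
      hnorm (fun i => u ζ i - ∑ k, ξs k i * hinner ζ (ηs k)) ≤ ε

/-- `u ∈ L^p(E,H)`, expressed through a family `A` of representatives of the `φ_t u`:
the family `(θ_n(u)^p)ₙ` is summable in `E`. -/
def InLp {I : Type*} (pp : ℝ) (A : T → (ell2 I →L[ℂ] ell2 I)) : Prop :=
  ∃ Θ : ℕ → C(T, ℝ), (∀ n t, Θ n t = sval (n + 1) (A t) ^ pp) ∧ Summable Θ

/-- the norm `‖u‖_p = ‖∑ₙ θ_n(u)^p‖^(1/p)`. -/
def pnorm {I : Type*} (pp : ℝ) (A : T → (ell2 I →L[ℂ] ell2 I)) : ℝ :=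
  (⨆ t : T, ∑' n : ℕ, sval (n + 1) (A t) ^ pp) ^ (1 / pp)

/-- the operator norm of an element of `L_E(H)`. -/
def opNormH (p : I → C(T, ℂ)) (u : Adjointable p) : ℝ :=
  ⨆ ξ : {ξ : I → C(T, ℂ) // MemH p ξ ∧ hnorm ξ ≤ 1}, hnorm (u.toFun ξ)

end

section Stmt17Helpers

open scoped ComplexOrder

variable {T : Type*} [TopologicalSpace T] [CompactSpace T] [T2Space T]

lemma s17_cre {z : ℂ} (hz : 0 ≤ z) : ‖z‖ = z.re := by
  obtain ⟨h1, h2⟩ := Complex.nonneg_iff.mp hz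
  rw [Complex.norm_def, Complex.normSq_apply, ← h2]
  simpa using Real.sqrt_mul_self h1

lemma s17_summable_eval {α : Type*} {f : α → C(T, ℂ)} (hf : Summable f) (t : T) :
    Summable fun a => f a t :=
  hf.mapL (ContinuousMap.evalCLM ℂ t)

lemma s17_eval_tsum {α : Type*} {f : α → C(T, ℂ)} (hf : Summable f) (t : T) :
    (∑' a, f a) t = ∑' a, f a t :=
  (ContinuousMap.evalCLM ℂ t).map_tsum hf

lemma s17_summable_of_dom {α : Type*} {f g : α → C(T, ℂ)} (hg : Summable g)
    (hdom : ∀ a t, ‖f a t‖ ≤ (g a t).re) : Summable f := by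
  rw [summable_iff_vanishing_norm] at hg ⊢
  intro ε hε
  obtain ⟨s, hs⟩ := hg ε hε
  refine ⟨s, fun G hG => ?_⟩
  have h2 := hs G hG
  have hb : ∀ t, ‖(∑ a ∈ G, f a) t‖ ≤ ‖∑ a ∈ G, g a‖ := by
    intro t
    rw [ContinuousMap.sum_apply]
    calc ‖∑ a ∈ G, f a t‖ ≤ ∑ a ∈ G, ‖f a t‖ := norm_sum_le _ _
      _ ≤ ∑ a ∈ G, (g a t).re := Finset.sum_le_sum fun a _ => hdom a t
      _ = ((∑ a ∈ G, g a) t).re := by rw [ContinuousMap.sum_apply, Complex.re_sum]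
      _ ≤ ‖(∑ a ∈ G, g a) t‖ := Complex.re_le_norm _
      _ ≤ ‖∑ a ∈ G, g a‖ := ContinuousMap.norm_coe_le_norm _ t
  exact lt_of_le_of_lt ((ContinuousMap.norm_le _ (norm_nonneg _)).mpr hb) h2

variable {I : Type*}

lemma s17_hasSum_sq {ζ : I → C(T, ℂ)} (hζ : Summable fun i => star (ζ i) * ζ i)
    (t : T) : HasSum (fun i => ‖ζ i t‖ ^ 2) ((hinner ζ ζ) t).re := by
  have h1 : HasSum (fun i => (star (ζ i) * ζ i) t) ((hinner ζ ζ) t) := by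
    have h := (s17_summable_eval hζ t).hasSum
    have h3 : (hinner ζ ζ) t = ∑' i, (star (ζ i) * ζ i) t := s17_eval_tsum hζ t
    rw [h3]
    exact h
  have h2 := h1.mapL Complex.reCLM
  have hterm : ∀ i, Complex.reCLM ((star (ζ i) * ζ i) t) = ‖ζ i t‖ ^ 2 := by
    intro i
    rw [ContinuousMap.mul_apply, ContinuousMap.star_apply, Complex.reCLM_apply,
      Complex.star_def, Complex.conj_mul', ← Complex.ofReal_pow, Complex.ofReal_re]
  rw [← Complex.reCLM_apply]
  simpa only [hterm] using h2

lemma s17_re_hinner_le_one {ζ : I → C(T, ℂ)} (h1 : hnorm ζ ≤ 1) (t : T) :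
    ((hinner ζ ζ) t).re ≤ 1 := by
  have h2 : ‖hinner ζ ζ‖ = hnorm ζ ^ 2 := by
    rw [hnorm, Real.sq_sqrt (norm_nonneg _)]
  have h3 : ‖hinner ζ ζ‖ ≤ 1 := by
    rw [h2]
    exact pow_le_one₀ (by rw [hnorm]; exact Real.sqrt_nonneg _) h1
  calc ((hinner ζ ζ) t).re ≤ ‖(hinner ζ ζ) t‖ :=
        Complex.re_le_norm _
    _ ≤ ‖hinner ζ ζ‖ := ContinuousMap.norm_coe_le_norm _ t
    _ ≤ 1 := h3

lemma s17_tsum_sq_le_one {ζ : I → C(T, ℂ)} (hζ : Summable fun i => star (ζ i) * ζ i)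
    (h1 : hnorm ζ ≤ 1) (t : T) : ∑' i, ‖ζ i t‖ ^ 2 ≤ 1 := by
  rw [(s17_hasSum_sq hζ t).tsum_eq]
  exact s17_re_hinner_le_one h1 t

lemma s17_sum_sq_le_one {ζ : I → C(T, ℂ)} (hζ : Summable fun i => star (ζ i) * ζ i)
    (h1 : hnorm ζ ≤ 1) (G : Finset I) (t : T) : ∑ i ∈ G, ‖ζ i t‖ ^ 2 ≤ 1 :=
  (Summable.sum_le_tsum G (fun i _ => sq_nonneg _) (s17_hasSum_sq hζ t).summable).trans
    (s17_tsum_sq_le_one hζ h1 t)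

lemma s17_coord_le_one {ζ : I → C(T, ℂ)} (hζ : Summable fun i => star (ζ i) * ζ i)
    (h1 : hnorm ζ ≤ 1) (i : I) (t : T) : ‖ζ i t‖ ≤ 1 := by
  have h := (Summable.le_tsum (s17_hasSum_sq hζ t).summable i fun j _ => sq_nonneg _).trans
    (s17_tsum_sq_le_one hζ h1 t)
  exact (pow_le_one_iff_of_nonneg (norm_nonneg _) two_ne_zero).mp h

lemma s17_norm_term {ζ η : I → C(T, ℂ)} (i : I) (t : T) :
    ‖(star (η i) * ζ i) t‖ = ‖η i t‖ * ‖ζ i t‖ := by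
  simp [ContinuousMap.mul_apply, ContinuousMap.star_apply, norm_mul]

lemma s17_summable_mul_norm {ζ η : I → C(T, ℂ)} (hζ : Summable fun i => star (ζ i) * ζ i)
    (hη : Summable fun i => star (η i) * η i) (t : T) :
    Summable fun i => ‖η i t‖ * ‖ζ i t‖ := by
  refine Summable.of_nonneg_of_le (fun i => mul_nonneg (norm_nonneg _) (norm_nonneg _))
    (fun i => ?_) ((s17_hasSum_sq hζ t).summable.add (s17_hasSum_sq hη t).summable)
  nlinarith [sq_nonneg (‖η i t‖ - ‖ζ i t‖), norm_nonneg (η i t), norm_nonneg (ζ i t)]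

lemma s17_tsum_mul_norm_le_one {ζ η : I → C(T, ℂ)}
    (hζ : Summable fun i => star (ζ i) * ζ i) (hζ1 : hnorm ζ ≤ 1)
    (hη : Summable fun i => star (η i) * η i) (hη1 : hnorm η ≤ 1) (t : T) :
    ∑' i, ‖η i t‖ * ‖ζ i t‖ ≤ 1 := by
  have ha := s17_hasSum_sq hζ t
  have hb := s17_hasSum_sq hη t
  have hab := (ha.add hb).div_const 2
  have hle : ∑' i, ‖η i t‖ * ‖ζ i t‖ ≤ ∑' i, (‖ζ i t‖ ^ 2 + ‖η i t‖ ^ 2) / 2 := by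
    refine Summable.tsum_le_tsum (fun i => ?_) (s17_summable_mul_norm hζ hη t) hab.summable
    nlinarith [sq_nonneg (‖η i t‖ - ‖ζ i t‖)]
  rw [hab.tsum_eq] at hle
  have h1 := s17_re_hinner_le_one hζ1 t
  have h2 := s17_re_hinner_le_one hη1 t
  linarith

lemma s17_summable_inner {ζ η : I → C(T, ℂ)} (hζ : Summable fun i => star (ζ i) * ζ i)
    (hη : Summable fun i => star (η i) * η i) :
    Summable fun i => star (η i) * ζ i := by
  refine s17_summable_of_dom (hζ.add hη) fun i t => ?_
  have h1 : ((star (ζ i) * ζ i + star (η i) * η i) t).re = ‖ζ i t‖ ^ 2 + ‖η i t‖ ^ 2 := by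
    simp [ContinuousMap.add_apply, ContinuousMap.mul_apply, ContinuousMap.star_apply,
      Complex.star_def, Complex.conj_mul', ← Complex.ofReal_pow]
  rw [h1, s17_norm_term]
  nlinarith [sq_nonneg (‖η i t‖ - ‖ζ i t‖), norm_nonneg (η i t), norm_nonneg (ζ i t)]

lemma s17_norm_inner_apply_le_one {ζ η : I → C(T, ℂ)}
    (hζ : Summable fun i => star (ζ i) * ζ i) (hζ1 : hnorm ζ ≤ 1)
    (hη : Summable fun i => star (η i) * η i) (hη1 : hnorm η ≤ 1) (t : T) :
    ‖(hinner ζ η) t‖ ≤ 1 := by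
  have hs := s17_summable_inner hζ hη
  have h0 : (hinner ζ η) t = ∑' i, (star (η i) * ζ i) t := s17_eval_tsum hs t
  rw [h0]
  have hsn : Summable fun i => ‖(star (η i) * ζ i) t‖ := by
    simpa [s17_norm_term] using s17_summable_mul_norm hζ hη t
  refine (norm_tsum_le_tsum_norm hsn).trans ?_
  calc ∑' i, ‖(star (η i) * ζ i) t‖ = ∑' i, ‖η i t‖ * ‖ζ i t‖ := by
        simp [s17_norm_term]
    _ ≤ 1 := s17_tsum_mul_norm_le_one hζ hζ1 hη hη1 t

lemma s17_norm_inner_sum_le_one {ζ η : I → C(T, ℂ)}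
    (hζ : Summable fun i => star (ζ i) * ζ i) (hζ1 : hnorm ζ ≤ 1)
    (hη : Summable fun i => star (η i) * η i) (hη1 : hnorm η ≤ 1) (J : Finset I) (t : T) :
    ‖(∑ i ∈ J, star (η i) * ζ i) t‖ ≤ 1 := by
  rw [ContinuousMap.sum_apply]
  calc ‖∑ i ∈ J, (star (η i) * ζ i) t‖ ≤ ∑ i ∈ J, ‖(star (η i) * ζ i) t‖ := norm_sum_le _ _
    _ = ∑ i ∈ J, ‖η i t‖ * ‖ζ i t‖ := by simp [s17_norm_term]
    _ ≤ ∑' i, ‖η i t‖ * ‖ζ i t‖ := Summable.sum_le_tsum J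
        (fun i _ => mul_nonneg (norm_nonneg _) (norm_nonneg _)) (s17_summable_mul_norm hζ hη t)
    _ ≤ 1 := s17_tsum_mul_norm_le_one hζ hζ1 hη hη1 t

lemma s17_tail_le {θ : ℕ → C(T, ℂ)} {F₀ : Finset ℕ} {δ : ℝ} (hδ : 0 ≤ δ)
    (hv : ∀ G : Finset ℕ, Disjoint G F₀ → ‖∑ n ∈ G, θ n‖ ≤ δ) (t : T) :
    ∑' n : ↑((↑F₀ : Set ℕ)ᶜ), (θ (↑n) t).re ≤ δ := by
  refine tsum_le_of_sum_le' hδ fun s => ?_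
  have hmap : ∑ n ∈ s, (θ (↑n) t).re
      = ∑ m ∈ s.map (Function.Embedding.subtype _), (θ m t).re := by
    rw [Finset.sum_map]; rfl
  rw [hmap]
  set G := s.map (Function.Embedding.subtype fun n => n ∈ (↑F₀ : Set ℕ)ᶜ) with hG
  have hdisj : Disjoint G F₀ := by
    rw [Finset.disjoint_left]
    rintro a ha haF
    rw [hG, Finset.mem_map] at ha
    obtain ⟨x, _, rfl⟩ := ha
    exact x.2 haF
  calc ∑ m ∈ G, (θ m t).re = ((∑ m ∈ G, θ m) t).re := by
        rw [ContinuousMap.sum_apply, Complex.re_sum]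
    _ ≤ ‖(∑ m ∈ G, θ m) t‖ := Complex.re_le_norm _
    _ ≤ ‖∑ m ∈ G, θ m‖ := ContinuousMap.norm_coe_le_norm _ t
    _ ≤ δ := hv G hdisj

lemma s17_sum_sq_tsum_le {α I' : Type*} (G : Finset I') (v : α → I' → ℝ) (b : α → ℝ)
    (hv0 : ∀ a i, 0 ≤ v a i) (hb : Summable b) (hb0 : ∀ a, 0 ≤ b a)
    (hvb : ∀ a, ∑ i ∈ G, v a i ^ 2 ≤ b a ^ 2) :
    ∑ i ∈ G, (∑' a, v a i) ^ 2 ≤ (∑' a, b a) ^ 2 := by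
  classical
  set vv : α → EuclideanSpace ℝ {x // x ∈ G} := fun a => WithLp.toLp 2 (fun i => v a (↑i)) with hvv
  have hnorm_le : ∀ a, ‖vv a‖ ≤ b a := by
    intro a
    rw [EuclideanSpace.norm_eq]
    have h1 : ∑ i : {x // x ∈ G}, ‖vv a i‖ ^ 2 = ∑ i ∈ G, v a i ^ 2 := by
      rw [← Finset.sum_coe_sort G (fun i => v a i ^ 2)]
      exact Finset.sum_congr rfl fun i _ => by
        simp [hvv, Real.norm_eq_abs, sq_abs]
    rw [h1]
    calc Real.sqrt (∑ i ∈ G, v a i ^ 2) ≤ Real.sqrt (b a ^ 2) := Real.sqrt_le_sqrt (hvb a)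
      _ = b a := Real.sqrt_sq (hb0 a)
  have hsv : Summable vv := Summable.of_norm_bounded hb hnorm_le
  have hsn : Summable fun a => ‖vv a‖ := hb.of_nonneg_of_le (fun a => norm_nonneg _) hnorm_le
  have hcoord : ∀ i : {x // x ∈ G}, (∑' a, vv a) i = ∑' a, v a (↑i) := fun i =>
    by simpa [hvv] using (EuclideanSpace.proj (𝕜 := ℝ) i).map_tsum hsv
  have hns : ‖∑' a, vv a‖ ≤ ∑' a, b a :=
    (norm_tsum_le_tsum_norm hsn).trans (Summable.tsum_le_tsum hnorm_le hsn hb)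
  calc ∑ i ∈ G, (∑' a, v a i) ^ 2 = ∑ i : {x // x ∈ G}, ((∑' a, vv a) i) ^ 2 := by
        rw [← Finset.sum_coe_sort G (fun i => (∑' a, v a i) ^ 2)]
        exact Finset.sum_congr rfl fun i _ => by rw [hcoord i]
    _ = ‖∑' a, vv a‖ ^ 2 := by
        rw [EuclideanSpace.norm_eq, Real.sq_sqrt (Finset.sum_nonneg fun i _ => sq_nonneg _)]
        exact Finset.sum_congr rfl fun i _ => by rw [Real.norm_eq_abs, sq_abs]
    _ ≤ (∑' a, b a) ^ 2 := pow_le_pow_left₀ (norm_nonneg _) hns 2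

end Stmt17Helpers

/-- Let `(θₙ)` be a summable family of nonnegative elements of `E` and
`(ξₙ)`, `(ηₙ)` sequences in the closed unit ball of `H`. Then (a) the family of operators
`(θₙ • (ξₙ⟨·,ηₙ⟩))ₙ`, `ζ ↦ ξₙ · (⟨ζ,ηₙ⟩ · θₙ)`, is summable in `K(H)` for the operator
norm, with sum `u`; and (b) with `e_i := (δ_{iλ} p_i)_λ ∈ H`, the family
`(⟨u e_i, e_i⟩)_{i∈I}` is summable in `E` with sum `∑ₙ θₙ ⟨ξₙ, ηₙ⟩`. -/
theorem stmt17 {T I : Type*} [TopologicalSpace T] [CompactSpace T] [T2Space T] [DecidableEq I]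
    (p : I → C(T, ℂ)) (hp : ∀ i t, p i t = 0 ∨ p i t = 1)
    (θ : ℕ → C(T, ℂ)) (hθpos : ∀ n t, 0 ≤ θ n t) (hθ : Summable θ)
    (ξs ηs : ℕ → I → C(T, ℂ))
    (hξ : ∀ n, MemH p (ξs n) ∧ hnorm (ξs n) ≤ 1)
    (hη : ∀ n, MemH p (ηs n) ∧ hnorm (ηs n) ≤ 1) :
    ∃ u : (I → C(T, ℂ)) → (I → C(T, ℂ)),
      -- (a) the finite partial sums converge to `u` uniformly on the unit ball of `H`
      (∀ ε : ℝ, 0 < ε → ∃ F₀ : Finset ℕ, ∀ F : Finset ℕ, F₀ ⊆ F →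
        ∀ ζ, MemH p ζ → hnorm ζ ≤ 1 →
          hnorm (fun i => u ζ i - ∑ n ∈ F, ξs n i * (hinner ζ (ηs n) * θ n)) ≤ ε) ∧
      -- (b) `∑ᵢ ⟨u eᵢ, eᵢ⟩ = ∑ₙ θₙ ⟨ξₙ, ηₙ⟩`, both families being summable in `E`
      ∃ S : C(T, ℂ),
        HasSum (fun n : ℕ => θ n * hinner (ξs n) (ηs n)) S ∧
        HasSum (fun i : I =>
          hinner (u (fun lam => if lam = i then p i else 0))
            (fun lam => if lam = i then p i else 0)) S := by
  classical
  have hξS : ∀ n, Summable fun i => star (ξs n i) * ξs n i := fun n => (hξ n).1.2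
  have hξ1 : ∀ n, hnorm (ξs n) ≤ 1 := fun n => (hξ n).2
  have hηS : ∀ n, Summable fun i => star (ηs n i) * ηs n i := fun n => (hη n).1.2
  have hη1 : ∀ n, hnorm (ηs n) ≤ 1 := fun n => (hη n).2
  have hθre : ∀ n t, ‖θ n t‖ = (θ n t).re := fun n t => s17_cre (hθpos n t)
  have hθre0 : ∀ n t, 0 ≤ (θ n t).re := fun n t => (hθre n t) ▸ norm_nonneg _
  have hθreS : ∀ t, Summable fun n => (θ n t).re := fun t =>
    (s17_summable_eval hθ t).mapL Complex.reCLM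
  -- pointwise domination of the terms
  have hdomf2 : ∀ (ζ : I → C(T, ℂ)), (Summable fun i => star (ζ i) * ζ i) → hnorm ζ ≤ 1 →
      ∀ n i t, ‖(ξs n i * (hinner ζ (ηs n) * θ n)) t‖ ≤ ‖ξs n i t‖ * (θ n t).re := by
    intro ζ hζ hζ1 n i t
    rw [ContinuousMap.mul_apply, ContinuousMap.mul_apply, norm_mul, norm_mul, hθre n t]
    have b2 : ‖(hinner ζ (ηs n)) t‖ ≤ 1 :=
      s17_norm_inner_apply_le_one hζ hζ1 (hηS n) (hη1 n) t
    have b3 := hθre0 n t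
    have b4 := norm_nonneg (ξs n i t)
    nlinarith [norm_nonneg ((hinner ζ (ηs n)) t),
      mul_nonneg (mul_nonneg b4 b3) (sub_nonneg.mpr b2)]
  have hdomf : ∀ (ζ : I → C(T, ℂ)), (Summable fun i => star (ζ i) * ζ i) → hnorm ζ ≤ 1 →
      ∀ n i t, ‖(ξs n i * (hinner ζ (ηs n) * θ n)) t‖ ≤ (θ n t).re := by
    intro ζ hζ hζ1 n i t
    refine (hdomf2 ζ hζ hζ1 n i t).trans ?_
    have b1 : ‖ξs n i t‖ ≤ 1 := s17_coord_le_one (hξS n) (hξ1 n) i t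
    exact mul_le_of_le_one_left (hθre0 n t) b1
  have hsum_term : ∀ (ζ : I → C(T, ℂ)), (Summable fun i => star (ζ i) * ζ i) → hnorm ζ ≤ 1 →
      ∀ i, Summable fun n => ξs n i * (hinner ζ (ηs n) * θ n) :=
    fun ζ hζ hζ1 i => s17_summable_of_dom hθ fun n t => hdomf ζ hζ hζ1 n i t
  refine ⟨fun ζ i => ∑' n, ξs n i * (hinner ζ (ηs n) * θ n), ?_, ?_⟩
  · -- part (a)
    intro ε hε
    obtain ⟨F₀, hF₀⟩ := summable_iff_vanishing_norm.mp hθ ε hε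
    refine ⟨F₀, fun F hFsub ζ hζmem hζ1 => ?_⟩
    have hζS := hζmem.2
    have hv : ∀ G : Finset ℕ, Disjoint G F → ‖∑ n ∈ G, θ n‖ ≤ ε :=
      fun G hG => (hF₀ G (hG.mono_right hFsub)).le
    have main : hnorm (fun i => (∑' n, ξs n i * (hinner ζ (ηs n) * θ n))
        - ∑ n ∈ F, ξs n i * (hinner ζ (ηs n) * θ n)) ≤ ε := by
      set w : I → C(T, ℂ) := fun i => (∑' n, ξs n i * (hinner ζ (ηs n) * θ n))
        - ∑ n ∈ F, ξs n i * (hinner ζ (ηs n) * θ n) with hw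
      have hsub : ∀ i, Summable fun n : ↑((↑F : Set ℕ)ᶜ) =>
          ξs (↑n) i * (hinner ζ (ηs ↑n) * θ ↑n) :=
        fun i => (hsum_term ζ hζS hζ1 i).subtype _
      have hw_eq : ∀ i, w i = ∑' n : ↑((↑F : Set ℕ)ᶜ), ξs (↑n) i * (hinner ζ (ηs ↑n) * θ ↑n) := by
        intro i
        show (∑' n, ξs n i * (hinner ζ (ηs n) * θ n))
            - ∑ n ∈ F, ξs n i * (hinner ζ (ηs n) * θ n)
            = ∑' n : ↑((↑F : Set ℕ)ᶜ), ξs (↑n) i * (hinner ζ (ηs ↑n) * θ ↑n)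
        rw [← Summable.sum_add_tsum_compl (s := F) (hsum_term ζ hζS hζ1 i)]
        ring
      have hθreK : ∀ t, Summable fun n : ↑((↑F : Set ℕ)ᶜ) => (θ (↑n) t).re :=
        fun t => (hθreS t).subtype _
      have htail : ∀ t, ∑' n : ↑((↑F : Set ℕ)ᶜ), (θ (↑n) t).re ≤ ε :=
        fun t => s17_tail_le hε.le hv t
      have hvsum : ∀ i t, Summable fun n : ↑((↑F : Set ℕ)ᶜ) => ‖ξs (↑n) i t‖ * (θ (↑n) t).re := by
        intro i t
        refine Summable.of_nonneg_of_le
          (fun n => mul_nonneg (norm_nonneg _) (hθre0 _ t)) (fun n => ?_) (hθreK t)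
        exact mul_le_of_le_one_left (hθre0 _ t) (s17_coord_le_one (hξS _) (hξ1 _) i t)
      have hwpt : ∀ i t, ‖w i t‖ ≤ ∑' n : ↑((↑F : Set ℕ)ᶜ), ‖ξs (↑n) i t‖ * (θ (↑n) t).re := by
        intro i t
        rw [hw_eq i, s17_eval_tsum (hsub i) t]
        have hnsum : Summable fun n : ↑((↑F : Set ℕ)ᶜ) =>
            ‖(ξs (↑n) i * (hinner ζ (ηs ↑n) * θ ↑n)) t‖ := by
          refine Summable.of_nonneg_of_le (fun n => norm_nonneg _)
            (fun n => hdomf2 ζ hζS hζ1 _ i t) (hvsum i t)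
        exact (norm_tsum_le_tsum_norm hnsum).trans
          (Summable.tsum_le_tsum (fun n => hdomf2 ζ hζS hζ1 _ i t) hnsum (hvsum i t))
      have hG2 : ∀ t (G : Finset I), ∑ i ∈ G, ‖w i t‖ ^ 2 ≤ ε ^ 2 := by
        intro t G
        have h1 : ∑ i ∈ G, ‖w i t‖ ^ 2
            ≤ ∑ i ∈ G, (∑' n : ↑((↑F : Set ℕ)ᶜ), ‖ξs (↑n) i t‖ * (θ (↑n) t).re) ^ 2 :=
          Finset.sum_le_sum fun i _ => pow_le_pow_left₀ (norm_nonneg _) (hwpt i t) 2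
        refine h1.trans ?_
        have h2 := s17_sum_sq_tsum_le G
          (fun (n : ↑((↑F : Set ℕ)ᶜ)) i => ‖ξs (↑n) i t‖ * (θ (↑n) t).re)
          (fun n : ↑((↑F : Set ℕ)ᶜ) => (θ (↑n) t).re)
          (fun n i => mul_nonneg (norm_nonneg _) (hθre0 _ t)) (hθreK t)
          (fun n => hθre0 _ t) ?_
        · refine h2.trans ?_
          exact pow_le_pow_left₀ (tsum_nonneg fun n => hθre0 _ t) (htail t) 2
        · intro n
          have h3 : ∀ i : I, (‖ξs (↑n) i t‖ * (θ (↑n) t).re) ^ 2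
              = ‖ξs (↑n) i t‖ ^ 2 * ((θ (↑n) t).re) ^ 2 := fun i => by ring
          calc ∑ i ∈ G, (‖ξs (↑n) i t‖ * (θ (↑n) t).re) ^ 2
              = (∑ i ∈ G, ‖ξs (↑n) i t‖ ^ 2) * ((θ (↑n) t).re) ^ 2 := by
                rw [Finset.sum_mul]; exact Finset.sum_congr rfl fun i _ => h3 i
            _ ≤ 1 * ((θ (↑n) t).re) ^ 2 := by
                refine mul_le_mul_of_nonneg_right ?_ (sq_nonneg _)
                exact s17_sum_sq_le_one (hξS _) (hξ1 _) G t
            _ = ((θ (↑n) t).re) ^ 2 := one_mul _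
      by_cases hsw : Summable fun i => star (w i) * w i
      · have hb : ‖hinner w w‖ ≤ ε ^ 2 := by
          rw [ContinuousMap.norm_le _ (by positivity)]
          intro t
          have h0 : (hinner w w) t = ∑' i, (star (w i) * w i) t := s17_eval_tsum hsw t
          rw [h0]
          have hss := (s17_hasSum_sq hsw t).summable
          have heqf : (fun i => ‖(star (w i) * w i) t‖) = fun i => ‖w i t‖ ^ 2 :=
            funext fun i => by rw [s17_norm_term, sq]
          have hnn : Summable fun i => ‖(star (w i) * w i) t‖ := by rw [heqf]; exact hss
          refine (norm_tsum_le_tsum_norm hnn).trans ?_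
          have heq : ∑' i, ‖(star (w i) * w i) t‖ = ∑' i, ‖w i t‖ ^ 2 :=
            tsum_congr fun i => by rw [s17_norm_term, sq]
          rw [heq]
          exact tsum_le_of_sum_le' (by positivity) fun G => hG2 t G
        show Real.sqrt ‖hinner w w‖ ≤ ε
        calc Real.sqrt ‖hinner w w‖ ≤ Real.sqrt (ε ^ 2) := Real.sqrt_le_sqrt hb
          _ = ε := Real.sqrt_sq hε.le
      · show Real.sqrt ‖hinner w w‖ ≤ ε
        have h0 : hinner w w = 0 := tsum_eq_zero_of_not_summable hsw
        rw [h0]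
        simpa using hε.le
    exact main
  · -- part (b)
    have hpstar : ∀ i, star (p i) = p i := fun i => ContinuousMap.ext fun t => by
      rcases hp i t with h | h <;> simp [ContinuousMap.star_apply, h]
    have heS : ∀ i : I, Summable fun lam =>
        star ((fun lam => if lam = i then p i else 0) lam)
          * (fun lam => if lam = i then p i else 0) lam := by
      intro i
      refine summable_of_ne_finset_zero (s := {i}) fun b hb => ?_
      rw [Finset.mem_singleton] at hb
      simp [if_neg hb]
    have hnorm_e : ∀ i : I, hnorm (fun lam => if lam = i then p i else 0) ≤ 1 := by
      intro i
      show Real.sqrt ‖hinner _ _‖ ≤ 1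
      have h1 : hinner (fun lam => if lam = i then p i else 0)
          (fun lam => if lam = i then p i else 0) = star (p i) * p i := by
        rw [hinner, tsum_eq_single i (fun b hb => by simp [if_neg hb])]
        simp
      rw [h1, hpstar i]
      refine Real.sqrt_le_one.mpr ?_
      have h2 : ‖p i * p i‖ ≤ 1 := by
        rw [ContinuousMap.norm_le _ zero_le_one]
        intro t
        rcases hp i t with h | h <;> simp [ContinuousMap.mul_apply, h]
      exact h2
    have hinner_eη : ∀ (n : ℕ) (i : I),
        hinner (fun lam => if lam = i then p i else 0) (ηs n) = star (ηs n i) * p i := by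
      intro n i
      rw [hinner, tsum_eq_single i (fun b hb => by simp [if_neg hb])]
      simp
    have hsumF2 : ∀ i, Summable fun n => θ n * (star (ηs n i) * ξs n i) := by
      intro i
      refine s17_summable_of_dom hθ fun n t => ?_
      rw [ContinuousMap.mul_apply, ContinuousMap.mul_apply, ContinuousMap.star_apply,
        norm_mul, norm_mul, hθre n t, norm_star]
      have b1 := s17_coord_le_one (hξS n) (hξ1 n) i t
      have b2 := s17_coord_le_one (hηS n) (hη1 n) i t
      have hle1 : ‖ηs n i t‖ * ‖ξs n i t‖ ≤ 1 :=
        mul_le_one₀ b2 (norm_nonneg _) b1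
      exact mul_le_of_le_one_right (hθre0 n t) hle1
    have hBsum : Summable fun n => θ n * hinner (ξs n) (ηs n) := by
      refine s17_summable_of_dom hθ fun n t => ?_
      rw [ContinuousMap.mul_apply, norm_mul, hθre n t]
      exact mul_le_of_le_one_right (hθre0 n t)
        (s17_norm_inner_apply_le_one (hξS n) (hξ1 n) (hηS n) (hη1 n) t)
    have hA : ∀ i : I, hinner
        ((fun (ζ : I → C(T, ℂ)) i => ∑' n, ξs n i * (hinner ζ (ηs n) * θ n))
          (fun lam => if lam = i then p i else 0))
        (fun lam => if lam = i then p i else 0)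
        = ∑' n, θ n * (star (ηs n i) * ξs n i) := by
      intro i
      have hsumt : Summable fun n => ξs n i *
          (hinner (fun lam => if lam = i then p i else 0) (ηs n) * θ n) :=
        hsum_term _ (heS i) (hnorm_e i) i
      have h1 : hinner
          ((fun (ζ : I → C(T, ℂ)) i => ∑' n, ξs n i * (hinner ζ (ηs n) * θ n))
            (fun lam => if lam = i then p i else 0))
          (fun lam => if lam = i then p i else 0)
          = star ((if i = i then p i else 0 : C(T, ℂ)))
            * ∑' n, ξs n i * (hinner (fun lam => if lam = i then p i else 0) (ηs n) * θ n) := by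
        rw [hinner, tsum_eq_single i (fun b hb => by simp [if_neg hb])]
      rw [h1, if_pos rfl, hpstar i]
      have hmul : p i * (∑' n, ξs n i *
          (hinner (fun lam => if lam = i then p i else 0) (ηs n) * θ n))
          = ∑' n, p i * (ξs n i *
            (hinner (fun lam => if lam = i then p i else 0) (ηs n) * θ n)) := by
        have h := (ContinuousLinearMap.mul ℂ C(T, ℂ) (p i)).map_tsum hsumt
        simpa using h
      rw [hmul]
      refine tsum_congr fun n => ?_
      show p i * (ξs n i * (hinner (fun lam => if lam = i then p i else 0) (ηs n) * θ n))
        = θ n * (star (ηs n i) * ξs n i)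
      rw [hinner_eη n i]
      have hξp : p i * ξs n i = ξs n i := (hξ n).1.1 i
      have hηp : star (ηs n i) * p i = star (ηs n i) := by
        calc star (ηs n i) * p i = star (ηs n i) * star (p i) := by rw [hpstar i]
          _ = star (p i * ηs n i) := (star_mul _ _).symm
          _ = star (ηs n i) := by rw [(hη n).1.1 i]
      rw [hηp]
      calc p i * (ξs n i * (star (ηs n i) * θ n))
          = (p i * ξs n i) * (star (ηs n i) * θ n) := by ring
        _ = ξs n i * (star (ηs n i) * θ n) := by rw [hξp]
        _ = θ n * (star (ηs n i) * ξs n i) := by ring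
    refine ⟨∑' n, θ n * hinner (ξs n) (ηs n), hBsum.hasSum, ?_⟩
    have hAeq : (fun i : I => hinner
        ((fun (ζ : I → C(T, ℂ)) i => ∑' n, ξs n i * (hinner ζ (ηs n) * θ n))
          (fun lam => if lam = i then p i else 0))
        (fun lam => if lam = i then p i else 0))
        = fun i : I => ∑' n, θ n * (star (ηs n i) * ξs n i) := funext fun i => hA i
    rw [hAeq]
    -- HasSum (fun i => ∑' n, θ n * (star (ηs n i) * ξs n i)) (∑' n, θ n * hinner (ξs n) (ηs n))
    have hCsum : ∀ J : Finset I, Summable fun n => θ n * ∑ i ∈ J, star (ηs n i) * ξs n i := by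
      intro J
      refine s17_summable_of_dom hθ fun n t => ?_
      rw [ContinuousMap.mul_apply, norm_mul, hθre n t]
      exact mul_le_of_le_one_right (hθre0 n t)
        (s17_norm_inner_sum_le_one (hξS n) (hξ1 n) (hηS n) (hη1 n) J t)
    have hsumJA : ∀ J : Finset I, ∑ i ∈ J, ∑' n, θ n * (star (ηs n i) * ξs n i)
        = ∑' n, θ n * ∑ i ∈ J, star (ηs n i) * ξs n i := by
      intro J
      rw [← Summable.tsum_finsetSum (fun i _ => hsumF2 i)]
      exact tsum_congr fun n => by rw [Finset.mul_sum]
    refine Metric.tendsto_atTop.mpr ?_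
    intro ε hε
    obtain ⟨F₀, hF₀⟩ := summable_iff_vanishing_norm.mp hθ (ε / 8) (by positivity)
    have hv : ∀ G : Finset ℕ, Disjoint G F₀ → ‖∑ n ∈ G, θ n‖ ≤ ε / 8 :=
      fun G hG => (hF₀ G hG).le
    set M := ∑ n ∈ F₀, ‖θ n‖ with hM
    have hM0 : 0 ≤ M := Finset.sum_nonneg fun n _ => norm_nonneg _
    set ε' := ε / (4 * (M + 1)) with hε'
    have hε'0 : 0 < ε' := by positivity
    have hRn : ∀ n : ℕ, ∃ sn : Finset I, ∀ J : Finset I, sn ⊆ J →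
        ‖θ n * hinner (ξs n) (ηs n) - θ n * ∑ i ∈ J, star (ηs n i) * ξs n i‖ ≤ ‖θ n‖ * ε' := by
      intro n
      have hhs : HasSum (fun i => star (ηs n i) * ξs n i) (hinner (ξs n) (ηs n)) :=
        (s17_summable_inner (hξS n) (hηS n)).hasSum
      obtain ⟨N, hN⟩ := Metric.tendsto_atTop.mp hhs ε' hε'0
      refine ⟨N, fun J hJ => ?_⟩
      have h1 : dist (∑ i ∈ J, star (ηs n i) * ξs n i) (hinner (ξs n) (ηs n)) < ε' :=
        hN J hJ
      rw [← mul_sub]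
      refine (norm_mul_le _ _).trans ?_
      refine mul_le_mul_of_nonneg_left ?_ (norm_nonneg _)
      rw [← dist_eq_norm, dist_comm]
      exact h1.le
    choose sfun hsfun using hRn
    refine ⟨F₀.sup sfun, fun J hJ => ?_⟩
    have hJn : ∀ n ∈ F₀, sfun n ⊆ J := fun n hn => (Finset.le_sup hn).trans hJ
    rw [dist_eq_norm, hsumJA J]
    have hdiff : (∑' n, θ n * ∑ i ∈ J, star (ηs n i) * ξs n i)
        - ∑' n, θ n * hinner (ξs n) (ηs n)
        = ∑' n, (θ n * ∑ i ∈ J, star (ηs n i) * ξs n i - θ n * hinner (ξs n) (ηs n)) :=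
      (Summable.tsum_sub (hCsum J) hBsum).symm
    rw [hdiff]
    set X : ℕ → C(T, ℂ) := fun n =>
      θ n * ∑ i ∈ J, star (ηs n i) * ξs n i - θ n * hinner (ξs n) (ηs n) with hX
    have hXsum : Summable X := (hCsum J).sub hBsum
    have hXnorm_pt : ∀ n t, ‖X n t‖ ≤ 2 * (θ n t).re := by
      intro n t
      rw [hX]
      simp only [ContinuousMap.sub_apply]
      have h1 : ‖(θ n * ∑ i ∈ J, star (ηs n i) * ξs n i) t‖ ≤ (θ n t).re := by
        rw [ContinuousMap.mul_apply, norm_mul, hθre n t]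
        exact mul_le_of_le_one_right (hθre0 n t)
          (s17_norm_inner_sum_le_one (hξS n) (hξ1 n) (hηS n) (hη1 n) J t)
      have h2 : ‖(θ n * hinner (ξs n) (ηs n)) t‖ ≤ (θ n t).re := by
        rw [ContinuousMap.mul_apply, norm_mul, hθre n t]
        exact mul_le_of_le_one_right (hθre0 n t)
          (s17_norm_inner_apply_le_one (hξS n) (hξ1 n) (hηS n) (hη1 n) t)
      calc ‖(θ n * ∑ i ∈ J, star (ηs n i) * ξs n i) t - (θ n * hinner (ξs n) (ηs n)) t‖
          ≤ ‖(θ n * ∑ i ∈ J, star (ηs n i) * ξs n i) t‖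
            + ‖(θ n * hinner (ξs n) (ηs n)) t‖ := norm_sub_le _ _
        _ ≤ 2 * (θ n t).re := by linarith
    have hpart1' : ∑ n ∈ F₀, ‖θ n‖ * ε' ≤ ε / 4 := by
      rw [← Finset.sum_mul, ← hM]
      have h1 : M * ε' ≤ (M + 1) * ε' := by nlinarith
      have h2 : (M + 1) * ε' = ε / 4 := by
        rw [hε']
        field_simp
      linarith
    have hbound : ∀ t, ‖(∑' n, X n) t‖ ≤ ε / 2 := by
      intro t
      rw [s17_eval_tsum hXsum t]
      have hXe : Summable fun n => X n t := s17_summable_eval hXsum t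
      rw [← Summable.sum_add_tsum_compl (s := F₀) hXe]
      refine (norm_add_le _ _).trans ?_
      have hpart1 : ‖∑ n ∈ F₀, X n t‖ ≤ ∑ n ∈ F₀, ‖θ n‖ * ε' := by
        refine (norm_sum_le _ _).trans (Finset.sum_le_sum fun n hn => ?_)
        calc ‖X n t‖ ≤ ‖X n‖ := ContinuousMap.norm_coe_le_norm _ t
          _ = ‖θ n * hinner (ξs n) (ηs n) - θ n * ∑ i ∈ J, star (ηs n i) * ξs n i‖ := by
              rw [hX, norm_sub_rev]
          _ ≤ ‖θ n‖ * ε' := hsfun n J (hJn n hn)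
      have h2sum : Summable fun n : ↑((↑F₀ : Set ℕ)ᶜ) => 2 * (θ (↑n) t).re :=
        ((hθreS t).subtype _).mul_left 2
      have hsubn : Summable fun n : ↑((↑F₀ : Set ℕ)ᶜ) => ‖X (↑n) t‖ :=
        Summable.of_nonneg_of_le (fun n => norm_nonneg _) (fun n => hXnorm_pt _ t) h2sum
      have hpart2 : ‖∑' n : ↑((↑F₀ : Set ℕ)ᶜ), X (↑n) t‖ ≤ 2 * (ε / 8) := by
        refine (norm_tsum_le_tsum_norm hsubn).trans ?_
        have h3 : ∑' n : ↑((↑F₀ : Set ℕ)ᶜ), ‖X (↑n) t‖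
            ≤ ∑' n : ↑((↑F₀ : Set ℕ)ᶜ), 2 * (θ (↑n) t).re :=
          Summable.tsum_le_tsum (fun n => hXnorm_pt _ t) hsubn h2sum
        have h4 : ∑' n : ↑((↑F₀ : Set ℕ)ᶜ), 2 * (θ (↑n) t).re
            = 2 * ∑' n : ↑((↑F₀ : Set ℕ)ᶜ), (θ (↑n) t).re := tsum_mul_left
        have h5 := s17_tail_le (by positivity : (0:ℝ) ≤ ε / 8) hv t
        rw [h4] at h3
        linarith
      linarith
    have hfin : ‖∑' n, X n‖ ≤ ε / 2 :=
      (ContinuousMap.norm_le _ (by positivity)).mpr hbound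
    linarith
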